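/- Let K be a field, t ∈ K with t ≠ 0 and t⁸ ≠ 1, n a finite index type, and M an n×n matrix over K. Assume there are indices a ≠ b such that rows a and b of M vanish outside columns a and b, with M_{a,a} = 0, M_{a,b} = M_{b,a} = t, M_{b,b} = t(t⁴ − t⁻⁴); and indices c ≠ d such that row c of M vanishes outside columns c and d, column c of M vanishes outside rows c and d, with M_{c,c} = M_{d,d} = 0, M_{c,d} = M_{d,c} = t⁻³. If x₁, x₂, x₃ ∈ K satisfy (M − x₁I)(M − x₂I)(M − x₃I) = 0, then the multiset {x₁, x₂, x₃} equals the multiset {t⁵, t⁻³, −t⁻³}. -/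

import Mathlib

lemma rowmul {K : Type*} [Field K] {n : Type*} [Fintype n] [DecidableEq n]
    (M N : Matrix n n K) (a b : n) (hab : a ≠ b)
    (h : ∀ j, j ≠ a → j ≠ b → M a j = 0) (j : n) :
    (M * N) a j = M a a * N a j + M a b * N b j := by
  rw [Matrix.mul_apply, ← Finset.sum_subset (Finset.subset_univ ({a, b} : Finset n)),
    Finset.sum_pair hab]
  intro k _ hk
  simp only [Finset.mem_insert, Finset.mem_singleton, not_or] at hk
  rw [h k hk.1 hk.2, zero_mul]

lemma colmul {K : Type*} [Field K] {n : Type*} [Fintype n] [DecidableEq n]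
    (M N : Matrix n n K) (c d : n) (hcd : c ≠ d)
    (h : ∀ j, j ≠ c → j ≠ d → M j c = 0) (j : n) :
    (N * M) j c = N j c * M c c + N j d * M d c := by
  rw [Matrix.mul_apply, ← Finset.sum_subset (Finset.subset_univ ({c, d} : Finset n)),
    Finset.sum_pair hcd]
  intro k _ hk
  simp only [Finset.mem_insert, Finset.mem_singleton, not_or] at hk
  rw [h k hk.1 hk.2, mul_zero]

lemma expandcube {K : Type*} [Field K] {n : Type*} [Fintype n] [DecidableEq n]
    (M : Matrix n n K) (x₁ x₂ x₃ : K) :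
    (M - x₁ • 1) * (M - x₂ • 1) * (M - x₃ • 1)
      = M * M * M - (x₁ + x₂ + x₃) • (M * M) + (x₁ * x₂ + x₁ * x₃ + x₂ * x₃) • M
        - (x₁ * x₂ * x₃) • (1 : Matrix n n K) := by
  simp only [sub_mul, mul_sub, smul_mul_assoc, mul_smul_comm, smul_smul, one_mul, mul_one,
    smul_sub, add_smul, smul_add]
  module

open Polynomial in
lemma expandpoly {K : Type*} [Field K] (a b c : K) :
    (X - C a) * ((X - C b) * (X - C c))
      = X ^ 3 - C (a + b + c) * X ^ 2 + C (a * b + a * c + b * c) * X - C (a * b * c) := by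
  simp only [map_add, map_mul]
  ring

theorem stmt_10 {K : Type*} [Field K] (t : K) (ht : t ≠ 0) (ht8 : t ^ 8 ≠ 1)
    {n : Type*} [Fintype n] [DecidableEq n] (M : Matrix n n K)
    (a b : n) (hab : a ≠ b)
    (hrowa : ∀ j, j ≠ a → j ≠ b → M a j = 0)
    (hrowb : ∀ j, j ≠ a → j ≠ b → M b j = 0)
    (haa : M a a = 0) (hab' : M a b = t) (hba : M b a = t)
    (hbb : M b b = t * (t ^ 4 - t⁻¹ ^ 4))
    (c d : n) (hcd : c ≠ d)
    (hrowc : ∀ j, j ≠ c → j ≠ d → M c j = 0)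
    (hcolc : ∀ j, j ≠ c → j ≠ d → M j c = 0)
    (hcc : M c c = 0) (hdd : M d d = 0)
    (hcd' : M c d = t⁻¹ ^ 3) (hdc : M d c = t⁻¹ ^ 3)
    (x₁ x₂ x₃ : K)
    (hmin : (M - x₁ • 1) * (M - x₂ • 1) * (M - x₃ • 1) = 0) :
    ({x₁, x₂, x₃} : Multiset K) = {t ^ 5, t⁻¹ ^ 3, -t⁻¹ ^ 3} := by
  have h8 : t ^ 8 - 1 ≠ 0 := sub_ne_zero.2 ht8
  rw [expandcube] at hmin
  set e1 := x₁ + x₂ + x₃ with he1def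
  set e2 := x₁ * x₂ + x₁ * x₃ + x₂ * x₃ with he2def
  set e3 := x₁ * x₂ * x₃ with he3def
  have E : ∀ i j, (M*M*M) i j - e1 * (M*M) i j + e2 * M i j
      - e3 * (1 : Matrix n n K) i j = 0 := by
    intro i j
    have h := congrFun (congrFun hmin i) j
    simpa using h
  have h2aa : (M*M) a a = t * t := by
    rw [rowmul M M a b hab hrowa, haa, hab', hba]; ring
  have h2ab : (M*M) a b = t * (t * (t ^ 4 - t⁻¹ ^ 4)) := by
    rw [rowmul M M a b hab hrowa, haa, hab', hbb]; ring
  have h2ba : (M*M) b a = t * (t * (t ^ 4 - t⁻¹ ^ 4)) := by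
    rw [rowmul M M b a hab.symm (fun j h1 h2 => hrowb j h2 h1), hba, haa, hbb]; ring
  have h2bb : (M*M) b b = t * t + (t * (t ^ 4 - t⁻¹ ^ 4)) * (t * (t ^ 4 - t⁻¹ ^ 4)) := by
    rw [rowmul M M b a hab.symm (fun j h1 h2 => hrowb j h2 h1), hba, hab', hbb]; ring
  have h3aa : (M*M*M) a a = t * (t * (t * (t ^ 4 - t⁻¹ ^ 4))) := by
    rw [mul_assoc, rowmul M (M*M) a b hab hrowa, haa, hab', h2ba]; ring
  have h3ab : (M*M*M) a b = t * (t * t + (t * (t ^ 4 - t⁻¹ ^ 4)) * (t * (t ^ 4 - t⁻¹ ^ 4))) := by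
    rw [mul_assoc, rowmul M (M*M) a b hab hrowa, haa, hab', h2bb]; ring
  have h2cc : (M*M) c c = t⁻¹ ^ 3 * t⁻¹ ^ 3 := by
    rw [rowmul M M c d hcd hrowc, hcc, hcd', hdc]; ring
  have h2cd : (M*M) c d = 0 := by
    rw [rowmul M M c d hcd hrowc, hcc, hcd', hdd]; ring
  have h3cc : (M*M*M) c c = 0 := by
    rw [colmul M (M*M) c d hcd hcolc, h2cc, h2cd, hcc]; ring
  have Eaa := E a a
  rw [h3aa, h2aa, haa, Matrix.one_apply_eq] at Eaa
  have Eab := E a b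
  rw [h3ab, h2ab, hab', Matrix.one_apply_ne hab] at Eab
  have Ecc := E c c
  rw [h3cc, h2cc, hcc, Matrix.one_apply_eq] at Ecc
  field_simp at Eaa Eab Ecc
  have key1 : (e1 - t ^ 5) * (t ^ 8 - 1) = 0 := by
    linear_combination (-(t^5)) * Eaa + Ecc
  have he1 : e1 = t ^ 5 := by
    rcases mul_eq_zero.1 key1 with h | h
    · exact sub_eq_zero.1 h
    · exact absurd h h8
  have key3 : t ^ 5 * (t * e3) = t ^ 5 * (-1) := by
    linear_combination (-1) * Ecc - he1
  have he3' : t * e3 = -1 := mul_left_cancel₀ (pow_ne_zero 5 ht) key3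
  have key2 : t ^ 7 * (t ^ 6 * e2) = t ^ 7 * (-1) := by
    linear_combination t ^ 7 * Eab + (t ^ 10 * (t ^ 8 - 1)) * he1
  have he2' : t ^ 6 * e2 = -1 := mul_left_cancel₀ (pow_ne_zero 7 ht) key2
  have h1 : x₁ + x₂ + x₃ = t ^ 5 + t⁻¹ ^ 3 + -t⁻¹ ^ 3 := by
    rw [← he1def, he1]; ring
  have h2 : x₁ * x₂ + x₁ * x₃ + x₂ * x₃
      = t ^ 5 * t⁻¹ ^ 3 + t ^ 5 * -t⁻¹ ^ 3 + t⁻¹ ^ 3 * -t⁻¹ ^ 3 := by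
    rw [← he2def]
    field_simp
    linear_combination he2'
  have h3 : x₁ * x₂ * x₃ = t ^ 5 * t⁻¹ ^ 3 * -t⁻¹ ^ 3 := by
    rw [← he3def]
    field_simp
    linear_combination he3'
  have hprod : (({x₁, x₂, x₃} : Multiset K).map fun r => Polynomial.X - Polynomial.C r).prod
      = (({t ^ 5, t⁻¹ ^ 3, -t⁻¹ ^ 3} : Multiset K).map fun r => Polynomial.X - Polynomial.C r).prod := by
    simp only [Multiset.insert_eq_cons, Multiset.map_cons, Multiset.map_singleton,
      Multiset.prod_cons, Multiset.prod_singleton]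
    rw [expandpoly, expandpoly, h1, h2, h3]
  have hroots := congrArg Polynomial.roots hprod
  rwa [Polynomial.roots_multiset_prod_X_sub_C, Polynomial.roots_multiset_prod_X_sub_C] at hroots
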